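/- Fix ρ ∈ (0, cot²θ) and a Lipschitz cutoff χ : ℝ → [0,1] with χ(t) = 1 for |t| ≤ 1 and χ(t) = 0 for |t| ≥ 2, and for n > 0 set h_n(x₂) = F(x₂ tan θ)^ρ · χ(x₂/n). Then R(h_n) → R(g_ρ) as n → +∞, where g_ρ(x₂) = F(x₂ tan θ)^ρ. -/

import Mathlib

open Real MeasureTheory Set Filter
open scoped Topology

/-- `F α t = ∫_{-∞}^t e^{-α|x|} dx`. -/
noncomputable def F (α t : ℝ) : ℝ := ∫ x in Iio t, exp (-α * |x|)

/-- The half-plane-like domain `Ω = {(x₁,x₂) : x₁ < x₂ tan θ}`. -/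
def Omg (θ : ℝ) : Set (ℝ × ℝ) := {p | p.1 < p.2 * tan θ}

/-- The functional `R(g) = ∫ g'·(g'·F(x tanθ) − g·e^{-α|x|tanθ}·cot θ) dx`. -/
noncomputable def Rfun (α θ : ℝ) (g : ℝ → ℝ) : ℝ :=
  ∫ x : ℝ, deriv g x *
    (deriv g x * F α (x * tan θ) - g x * exp (-α * |x| * tan θ) * cot θ)

/-- The quantity `Λ(θ)` from the upper bound for the lowest eigenvalue. -/
noncomputable def Lam (θ : ℝ) : ℝ :=
  3 * cos θ ^ 6 * ((2:ℝ) ^ (2 * cos θ ^ 2) - 1) ^ 2 /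
    (2 * (1 + 2 * cos θ ^ 2) ^ 3 *
      (108 + 180 * cos θ ^ 2 - 132 * cos θ ^ 4 + 45 * cos θ ^ 6 - 5 * cos θ ^ 8))

lemma integrable_exp_neg_abs' {a : ℝ} (ha : 0 < a) :
    Integrable (fun x : ℝ => exp (-a * |x|)) := by
  have hIoi : IntegrableOn (fun x : ℝ => exp (-a * |x|)) (Ioi 0) := by
    refine (exp_neg_integrableOn_Ioi 0 ha).congr_fun (fun x hx => ?_) measurableSet_Ioi
    rw [abs_of_pos hx]
  rw [← integrableOn_univ, ← @Iio_union_Ici _ _ (0 : ℝ), integrableOn_union,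
    integrableOn_Ici_iff_integrableOn_Ioi]
  refine ⟨?_, hIoi⟩
  rw [← (Measure.measurePreserving_neg (volume : Measure ℝ)).integrableOn_comp_preimage
      (Homeomorph.neg ℝ).measurableEmbedding]
  simp only [Function.comp_def, abs_neg, neg_preimage, neg_Iio, neg_zero]
  exact hIoi

lemma F_eq_Iic {α : ℝ} (t : ℝ) : F α t = ∫ x in Iic t, exp (-α * |x|) :=
  (integral_Iic_eq_integral_Iio' (measure_singleton t)).symm

lemma F_of_nonpos {α : ℝ} (hα : 0 < α) {t : ℝ} (ht : t ≤ 0) :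
    F α t = exp (α * t) / α := by
  rw [F_eq_Iic]
  refine tendsto_nhds_unique
    (intervalIntegral_tendsto_integral_Iic t ((integrable_exp_neg_abs' hα).integrableOn)
      tendsto_id) ?_
  have key : ∀ᶠ y in atBot, (∫ x in y..t, exp (-α * |x|)) =
      exp (α * t) / α - exp (α * y) / α := by
    filter_upwards [Iic_mem_atBot t] with y hy
    have h1 : (∫ x in y..t, exp (-α * |x|)) = ∫ x in y..t, exp (α * x) := by
      refine intervalIntegral.integral_congr (fun x hx => ?_)
      rw [uIcc_of_le hy] at hx
      have hx0 : x ≤ 0 := hx.2.trans ht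
      rw [abs_of_nonpos hx0]; ring_nf
    rw [h1]
    have h2 : (∫ x in y..t, exp (α * x)) = α⁻¹ • ∫ x in α*y..α*t, exp x := by
      exact intervalIntegral.integral_comp_mul_left exp hα.ne'
    rw [h2, integral_exp, smul_eq_mul]
    field_simp
  have hlim : Tendsto (fun y : ℝ => exp (α * t) / α - exp (α * y) / α) atBot
      (𝓝 (exp (α * t) / α - 0 / α)) := by
    refine tendsto_const_nhds.sub (Tendsto.div_const ?_ _)
    exact tendsto_exp_atBot.comp (tendsto_id.const_mul_atBot hα)
  rw [show exp (α * t) / α - 0 / α = exp (α * t) / α by ring] at hlim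
  exact Tendsto.congr' (EventuallyEq.symm key) hlim

lemma continuous_exp_neg_abs (α : ℝ) : Continuous (fun x : ℝ => exp (-α * |x|)) :=
  Real.continuous_exp.comp ((continuous_const.mul continuous_abs))

lemma hasDerivAt_F {α : ℝ} (hα : 0 < α) (t : ℝ) :
    HasDerivAt (F α) (exp (-α * |t|)) t := by
  have heq : F α = fun u => F α 0 + ∫ x in (0:ℝ)..u, exp (-α * |x|) := by
    funext u
    rw [F_eq_Iic, F_eq_Iic,
      ← intervalIntegral.integral_Iic_sub_Iic
        ((integrable_exp_neg_abs' hα).integrableOn)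
        ((integrable_exp_neg_abs' hα).integrableOn)]
    ring
  rw [heq]
  exact ((intervalIntegral.integral_hasDerivAt_right
    ((integrable_exp_neg_abs' hα).intervalIntegrable)
    ((continuous_exp_neg_abs α).stronglyMeasurableAtFilter _ _)
    (continuous_exp_neg_abs α).continuousAt)).const_add _

lemma F_lower {α : ℝ} (hα : 0 < α) (t : ℝ) :
    exp (α * min t 0) / α ≤ F α t := by
  rw [← F_of_nonpos hα (min_le_right t 0)]
  refine setIntegral_mono_set ((integrable_exp_neg_abs' hα).integrableOn) ?_ ?_
  · exact Eventually.of_forall fun x => (exp_pos _).le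
  · exact HasSubset.Subset.eventuallyLE (Iio_subset_Iio (min_le_left t 0))

lemma F_pos {α : ℝ} (hα : 0 < α) (t : ℝ) : 0 < F α t :=
  lt_of_lt_of_le (div_pos (exp_pos _) hα) (F_lower hα t)

lemma F_le {α : ℝ} (hα : 0 < α) (t : ℝ) : F α t ≤ 2 / α := by
  have h1 : F α t ≤ ∫ x : ℝ, exp (-α * |x|) := by
    refine setIntegral_le_integral (integrable_exp_neg_abs' hα) ?_
    exact Eventually.of_forall fun x => (exp_pos _).le
  have h2 : (∫ x : ℝ, exp (-α * |x|)) = 2 / α := by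
    have hsplit : (∫ x : ℝ, exp (-α * |x|)) =
        (∫ x in Iic (0:ℝ), exp (-α * |x|)) + ∫ x in Ioi (0:ℝ), exp (-α * |x|) := by
      rw [← intervalIntegral.integral_Iic_add_Ioi (b := (0:ℝ))
        ((integrable_exp_neg_abs' hα).integrableOn)
        ((integrable_exp_neg_abs' hα).integrableOn)]
    have hneg : (∫ x in Ioi (0:ℝ), exp (-α * |x|)) = ∫ x in Iic (0:ℝ), exp (-α * |x|) := by
      have := integral_comp_neg_Ioi (c := (0:ℝ)) (f := fun x => exp (-α * |x|))
      simp only [abs_neg, neg_zero] at this ⊢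
      rw [← this]
    rw [hsplit, hneg, ← F_eq_Iic, F_of_nonpos hα le_rfl]
    rw [mul_zero, exp_zero]
    ring
  linarith

lemma continuous_F {α : ℝ} (hα : 0 < α) : Continuous (F α) :=
  continuous_iff_continuousAt.2 fun t => (hasDerivAt_F hα t).continuousAt

lemma hasDerivAt_g {α s ρ : ℝ} (hα : 0 < α) (x : ℝ) :
    HasDerivAt (fun x => F α (x * s) ^ ρ)
      (ρ * F α (x * s) ^ (ρ - 1) * (exp (-α * |x * s|) * s)) x := by
  have h1 : HasDerivAt (fun x : ℝ => F α (x * s)) (exp (-α * |x * s|) * s) x :=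
    by have h := (hasDerivAt_F hα (x * s)).comp x (hasDerivAt_mul_const (x := x) s); exact h
  have h2 : HasDerivAt (fun y : ℝ => y ^ ρ) (ρ * F α (x * s) ^ (ρ - 1)) (F α (x * s)) :=
    Real.hasDerivAt_rpow_const (Or.inl (F_pos hα _).ne')
  exact h2.comp x h1

lemma F_rpow_exp_bound {α s ρ : ℝ} (hα : 0 < α) (hs : 0 < s) (hρ : 0 < ρ) (x : ℝ) :
    F α (x * s) ^ (ρ - 1) * exp (-(α * s) * |x|) ≤
      max (α ^ (1 - ρ)) ((2 / α) ^ (ρ - 1)) * exp (-(min ρ 1 * (α * s)) * |x|) := by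
  set M := max (α ^ (1 - ρ)) ((2 / α) ^ (ρ - 1)) with hM
  rcases le_or_gt ρ 1 with h1 | h1
  · -- ρ ≤ 1
    have hc : min ρ 1 = ρ := min_eq_left h1
    have hlow := F_lower hα (x * s)
    have hFpos := F_pos hα (x * s)
    have hb : F α (x * s) ^ (ρ - 1) ≤ (exp (α * min (x * s) 0) / α) ^ (ρ - 1) :=
      Real.rpow_le_rpow_of_nonpos (div_pos (exp_pos _) hα) hlow (by linarith)
    have heq : (exp (α * min (x * s) 0) / α) ^ (ρ - 1) =
        exp ((ρ - 1) * (α * min (x * s) 0)) * α ^ (1 - ρ) := by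
      rw [Real.div_rpow (exp_pos _).le hα.le, ← Real.exp_mul,
        div_eq_mul_inv, ← Real.rpow_neg hα.le, neg_sub, mul_comm (α * min (x * s) 0)]
    have key : exp ((ρ - 1) * (α * min (x * s) 0)) * exp (-(α * s) * |x|) ≤
        exp (-(min ρ 1 * (α * s)) * |x|) := by
      rw [← Real.exp_add, Real.exp_le_exp, hc]
      rcases le_or_gt 0 x with hx | hx
      · rw [abs_of_nonneg hx, min_eq_right (by positivity : (0:ℝ) ≤ x * s)]
        nlinarith [mul_nonneg (mul_nonneg (by linarith : (0:ℝ) ≤ 1 - ρ) (mul_pos hα hs).le) hx]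
      · rw [abs_of_neg hx, min_eq_left (by nlinarith : x * s ≤ 0)]
        nlinarith [mul_pos hα hs]
    calc F α (x * s) ^ (ρ - 1) * exp (-(α * s) * |x|)
        ≤ (exp (α * min (x * s) 0) / α) ^ (ρ - 1) * exp (-(α * s) * |x|) := by
          exact mul_le_mul_of_nonneg_right hb (exp_pos _).le
      _ = α ^ (1 - ρ) * (exp ((ρ - 1) * (α * min (x * s) 0)) * exp (-(α * s) * |x|)) := by
          rw [heq]; ring
      _ ≤ α ^ (1 - ρ) * exp (-(min ρ 1 * (α * s)) * |x|) := by
          exact mul_le_mul_of_nonneg_left key (Real.rpow_nonneg hα.le _)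
      _ ≤ M * exp (-(min ρ 1 * (α * s)) * |x|) := by
          exact mul_le_mul_of_nonneg_right (le_max_left _ _) (exp_pos _).le
  · -- 1 < ρ
    have hc : min ρ 1 = 1 := min_eq_right h1.le
    have hb : F α (x * s) ^ (ρ - 1) ≤ (2 / α) ^ (ρ - 1) :=
      Real.rpow_le_rpow (F_pos hα _).le (F_le hα _) (by linarith)
    have he : exp (-(α * s) * |x|) ≤ exp (-(min ρ 1 * (α * s)) * |x|) := by
      rw [Real.exp_le_exp, hc, one_mul]
    calc F α (x * s) ^ (ρ - 1) * exp (-(α * s) * |x|)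
        ≤ (2 / α) ^ (ρ - 1) * exp (-(min ρ 1 * (α * s)) * |x|) :=
          mul_le_mul hb he (exp_pos _).le (Real.rpow_nonneg (by positivity) _)
      _ ≤ M * exp (-(min ρ 1 * (α * s)) * |x|) :=
          mul_le_mul_of_nonneg_right (le_max_right _ _) (exp_pos _).le

lemma deriv_mul_cutoff_bound {g ψ : ℝ → ℝ} {g' L : ℝ} {x : ℝ}
    (hg : HasDerivAt g g' x) (hψb : ∀ t, |ψ t| ≤ 1) (hL : 0 ≤ L)
    (hlip : ∀ y, |ψ y - ψ x| ≤ L * |y - x|) :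
    |deriv (fun y => g y * ψ y) x| ≤ |g'| + |g x| * L := by
  by_cases hd : DifferentiableAt ℝ (fun y => g y * ψ y) x
  · have hf : HasDerivAt (fun y => g y * ψ y) (deriv (fun y => g y * ψ y) x) x :=
      hd.hasDerivAt
    have htd := hasDerivAt_iff_tendsto_slope.1 hf
    have htg := hasDerivAt_iff_tendsto_slope.1 hg
    refine le_of_tendsto_of_tendsto' htd.abs (htg.abs.add_const (|g x| * L)) fun y => ?_
    by_cases hyx : y = x
    · subst hyx
      simp [slope_same]
      positivity
    · have hsub : y - x ≠ 0 := sub_ne_zero.2 hyx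
      have hslope : slope (fun y => g y * ψ y) x y =
          slope g x y * ψ y + g x * ((ψ y - ψ x) / (y - x)) := by
        simp only [slope_def_field]
        field_simp
        ring
      rw [hslope]
      refine (abs_add_le _ _).trans (add_le_add ?_ ?_)
      · calc |slope g x y * ψ y| = |slope g x y| * |ψ y| := abs_mul _ _
          _ ≤ |slope g x y| * 1 := by
              exact mul_le_mul_of_nonneg_left (hψb y) (abs_nonneg _)
          _ = |slope g x y| := mul_one _
      · calc |g x * ((ψ y - ψ x) / (y - x))| = |g x| * (|ψ y - ψ x| / |y - x|) := by
              rw [abs_mul, abs_div]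
          _ ≤ |g x| * L := by
              refine mul_le_mul_of_nonneg_left ?_ (abs_nonneg _)
              rw [div_le_iff₀ (abs_pos.2 hsub)]
              exact hlip y
  · rw [deriv_zero_of_not_differentiableAt hd]
    simp only [abs_zero]
    positivity

set_option maxHeartbeats 2000000 in
/-- `R(h_n) → R(g_ρ)` as `n → ∞`, where `h_n = g_ρ · χ(·/n)`. -/
theorem R_of_h_n_tendsto (α θ : ℝ) (hα : 0 < α) (hθ : θ ∈ Ioo 0 (π/2))
    (ρ : ℝ) (hρ : ρ ∈ Ioo 0 (cot θ ^ 2))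
    (χ : ℝ → ℝ) (hχlip : ∃ K, LipschitzWith K χ)
    (hχ01 : ∀ t, χ t ∈ Icc (0:ℝ) 1)
    (hχ1 : ∀ t, |t| ≤ 1 → χ t = 1)
    (hχ0 : ∀ t, 2 ≤ |t| → χ t = 0) :
    Tendsto (fun n : ℝ => Rfun α θ (fun x => F α (x * tan θ) ^ ρ * χ (x / n)))
      atTop (nhds (Rfun α θ (fun x => F α (x * tan θ) ^ ρ))) := by
  obtain ⟨K, hK⟩ := hχlip
  obtain ⟨hθ0, hθ2⟩ := hθ
  obtain ⟨hρ0, -⟩ := hρ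
  have hs : 0 < tan θ := tan_pos_of_pos_of_lt_pi_div_two hθ0 hθ2
  have hcot : 0 < Real.cot θ := by
    rw [Real.cot_eq_cos_div_sin]
    exact div_pos (Real.cos_pos_of_mem_Ioo ⟨by linarith [pi_pos], hθ2⟩)
      (Real.sin_pos_of_pos_of_lt_pi hθ0 (by linarith [pi_pos]))
  simp only [Rfun]
  set s := tan θ with hs_def
  set c := min ρ 1 * (α * s) with hc_def
  have hc : 0 < c := mul_pos (lt_min hρ0 one_pos) (mul_pos hα hs)
  set Cg := ρ * s * max (α ^ (1 - ρ)) ((2 / α) ^ (ρ - 1)) with hCg_def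
  have hCg : 0 ≤ Cg := by
    refine mul_nonneg (mul_nonneg hρ0.le hs.le) ?_
    exact le_trans (Real.rpow_nonneg hα.le _) (le_max_left _ _)
  set Mg := (2 / α) ^ ρ with hMg_def
  have hMg : 0 ≤ Mg := Real.rpow_nonneg (by positivity) _
  set CK := Real.sqrt 5 * K * Mg with hCK_def
  have hCK : 0 ≤ CK := by positivity
  set E := fun x : ℝ => Cg * exp (-c * |x|) + CK / Real.sqrt (1 + x ^ 2) with hE_def
  have hsq : ∀ x : ℝ, (1:ℝ) ≤ Real.sqrt (1 + x ^ 2) := by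
    intro x
    have h := Real.sqrt_le_sqrt (show (1:ℝ) ≤ 1 + x ^ 2 by nlinarith [sq_nonneg x])
    rwa [Real.sqrt_one] at h
  have hE_nonneg : ∀ x, 0 ≤ E x := by
    intro x
    have := hsq x
    positivity
  have hexp_le_one : ∀ a : ℝ, a ≤ 0 → exp a ≤ 1 := fun a ha =>
    Real.exp_le_one_iff.2 ha
  have hE_le : ∀ x, E x ≤ Cg + CK := by
    intro x
    refine add_le_add ?_ (div_le_self hCK (hsq x))
    calc Cg * exp (-c * |x|) ≤ Cg * 1 := by
          refine mul_le_mul_of_nonneg_left ?_ hCg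
          exact hexp_le_one _ (by nlinarith [abs_nonneg x])
      _ = Cg := mul_one _
  -- derivative of g and its bound
  have hgd : ∀ x : ℝ, deriv (fun y => F α (y * s) ^ ρ) x =
      ρ * F α (x * s) ^ (ρ - 1) * (exp (-α * |x * s|) * s) := fun x =>
    (hasDerivAt_g hα x).deriv
  have hgd_bound : ∀ x : ℝ, |deriv (fun y => F α (y * s) ^ ρ) x| ≤ Cg * exp (-c * |x|) := by
    intro x
    rw [hgd x]
    have habs : |x * s| = |x| * s := by rw [abs_mul, abs_of_pos hs]
    have hFb := F_rpow_exp_bound hα hs hρ0 x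
    have hFpow : (0:ℝ) ≤ F α (x * s) ^ (ρ - 1) := Real.rpow_nonneg (F_pos hα _).le _
    have hval : |ρ * F α (x * s) ^ (ρ - 1) * (exp (-α * |x * s|) * s)| =
        ρ * s * (F α (x * s) ^ (ρ - 1) * exp (-(α * s) * |x|)) := by
      rw [abs_of_nonneg (by positivity)]
      rw [habs]
      ring_nf
    rw [hval, hCg_def, hc_def]
    calc ρ * s * (F α (x * s) ^ (ρ - 1) * exp (-(α * s) * |x|))
        ≤ ρ * s * (max (α ^ (1 - ρ)) ((2 / α) ^ (ρ - 1)) * exp (-(min ρ 1 * (α * s)) * |x|)) :=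
          mul_le_mul_of_nonneg_left hFb (by positivity)
      _ = ρ * s * max (α ^ (1 - ρ)) ((2 / α) ^ (ρ - 1)) * exp (-(min ρ 1 * (α * s)) * |x|) := by
          ring
  have hg_abs : ∀ x : ℝ, |F α (x * s) ^ ρ| ≤ Mg := by
    intro x
    rw [abs_of_nonneg (Real.rpow_nonneg (F_pos hα _).le _), hMg_def]
    exact Real.rpow_le_rpow (F_pos hα _).le (F_le hα _) hρ0.le
  have hχabs : ∀ t, |χ t| ≤ 1 := fun t =>
    abs_le.2 ⟨by linarith [(hχ01 t).1], (hχ01 t).2⟩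
  -- eventual equality lemmas
  have hev1 : ∀ n x : ℝ, |x| < n →
      (fun y => F α (y * s) ^ ρ * χ (y / n)) =ᶠ[nhds x] (fun y => F α (y * s) ^ ρ) := by
    intro n x hxn
    have hn0 : 0 < n := lt_of_le_of_lt (abs_nonneg x) hxn
    have hev : ∀ᶠ y in nhds x, |y| < n :=
      Filter.Tendsto.eventually_lt_const hxn (continuous_abs.tendsto x)
    filter_upwards [hev] with y hy
    rw [hχ1 (y / n) (by rw [abs_div, abs_of_pos hn0]; exact (div_le_one hn0).2 hy.le), mul_one]
  have hev0 : ∀ n x : ℝ, 0 < n → 2 * n < |x| →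
      (fun y => F α (y * s) ^ ρ * χ (y / n)) =ᶠ[nhds x] (fun _ => (0:ℝ)) := by
    intro n x hn0 hxn
    have hev : ∀ᶠ y in nhds x, 2 * n < |y| :=
      Filter.Tendsto.eventually_const_lt hxn (continuous_abs.tendsto x)
    filter_upwards [hev] with y hy
    rw [hχ0 (y / n) (by rw [abs_div, abs_of_pos hn0]; rw [le_div_iff₀ hn0]; linarith), mul_zero]
  -- the key derivative bound, for n ≥ 1
  have hbn : ∀ n : ℝ, 1 ≤ n → ∀ x : ℝ,
      |deriv (fun y => F α (y * s) ^ ρ * χ (y / n)) x| ≤ E x := by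
    intro n hn x
    have hn0 : 0 < n := lt_of_lt_of_le one_pos hn
    by_cases h1 : |x| < n
    · rw [(hev1 n x h1).deriv_eq]
      refine (hgd_bound x).trans ?_
      rw [hE_def]
      have : 0 ≤ CK / Real.sqrt (1 + x ^ 2) := by positivity
      linarith
    · by_cases h2 : 2 * n < |x|
      · rw [(hev0 n x hn0 h2).deriv_eq, deriv_const]
        simpa using hE_nonneg x
      · push_neg at h1 h2
        have hlip' : ∀ y : ℝ, |χ (y / n) - χ (x / n)| ≤ (K / n) * |y - x| := by
          intro y
          have := hK.dist_le_mul (y / n) (x / n)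
          rw [Real.dist_eq, Real.dist_eq] at this
          calc |χ (y / n) - χ (x / n)| ≤ K * |y / n - x / n| := this
            _ = (K / n) * |y - x| := by
                rw [show y / n - x / n = (y - x) / n by ring, abs_div, abs_of_pos hn0]
                ring
        have hKn : (0:ℝ) ≤ (K : ℝ) / n := by positivity
        refine (deriv_mul_cutoff_bound (hasDerivAt_g hα x) (fun t => hχabs (t / n))
          hKn hlip').trans ?_
        have h1' : |ρ * F α (x * s) ^ (ρ - 1) * (exp (-α * |x * s|) * s)| ≤
            Cg * exp (-c * |x|) := by
          rw [← hgd x]; exact hgd_bound x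
        have h2' : |F α (x * s) ^ ρ| * ((K : ℝ) / n) ≤ CK / Real.sqrt (1 + x ^ 2) := by
          have hsp : 0 < Real.sqrt (1 + x ^ 2) := lt_of_lt_of_le one_pos (hsq x)
          have hsqle : Real.sqrt (1 + x ^ 2) ≤ Real.sqrt 5 * n := by
            have hx2 : x ^ 2 ≤ 4 * n ^ 2 := by nlinarith [sq_abs x, abs_nonneg x]
            have h5 : (1:ℝ) + x ^ 2 ≤ 5 * n ^ 2 := by nlinarith
            have h6 := Real.sqrt_le_sqrt h5
            rwa [show (5:ℝ) * n ^ 2 = (Real.sqrt 5 * n) ^ 2 by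
              rw [mul_pow, Real.sq_sqrt (by norm_num : (0:ℝ) ≤ 5)],
              Real.sqrt_sq (by positivity)] at h6
          calc |F α (x * s) ^ ρ| * ((K : ℝ) / n) ≤ Mg * ((K : ℝ) / n) :=
                mul_le_mul_of_nonneg_right (hg_abs x) hKn
            _ = Mg * (K : ℝ) / n := by ring
            _ ≤ CK / Real.sqrt (1 + x ^ 2) := by
                rw [div_le_div_iff₀ hn0 hsp, hCK_def]
                calc Mg * (K : ℝ) * Real.sqrt (1 + x ^ 2)
                    ≤ Mg * (K : ℝ) * (Real.sqrt 5 * n) :=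
                      mul_le_mul_of_nonneg_left hsqle (by positivity)
                  _ = Real.sqrt 5 * (K : ℝ) * Mg * n := by ring
        rw [hE_def]
        exact add_le_add h1' h2'
  -- the dominating function
  set bound := fun x : ℝ =>
    E x * (E x * (2 / α) + Mg * exp (-(α * s) * |x|) * Real.cot θ) with hbound_def
  have hee : ∀ x : ℝ, exp (-α * |x| * s) = exp (-(α * s) * |x|) := by
    intro x; ring_nf
  have hexpm : Continuous fun x : ℝ => exp (-α * |x| * s) :=
    Real.continuous_exp.comp ((continuous_const.mul continuous_abs).mul continuous_const)
  have hFcont : Continuous fun x : ℝ => F α (x * s) :=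
    (continuous_F hα).comp (continuous_id.mul continuous_const)
  have hgcont : Continuous fun x : ℝ => F α (x * s) ^ ρ :=
    hFcont.rpow_const fun x => Or.inr hρ0.le
  have hEcont : Continuous E := by
    rw [hE_def]
    refine Continuous.add ?_ ?_
    · exact continuous_const.mul (Real.continuous_exp.comp (continuous_const.mul continuous_abs))
    · refine continuous_const.div ?_ fun x => (lt_of_lt_of_le one_pos (hsq x)).ne'
      exact Real.continuous_sqrt.comp (continuous_const.add (continuous_pow 2))
  have hbound_cont : Continuous bound := by
    rw [hbound_def]
    exact hEcont.mul ((hEcont.mul continuous_const).add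
      ((continuous_const.mul (Real.continuous_exp.comp
        ((continuous_const.mul continuous_abs)))).mul continuous_const))
  have hbound_nonneg : ∀ x, 0 ≤ bound x := by
    intro x
    have h1 := hE_nonneg x
    have h2 : (0:ℝ) ≤ Mg * exp (-(α * s) * |x|) * Real.cot θ := by positivity
    have h3 : (0:ℝ) ≤ E x * (2 / α) := by positivity
    rw [hbound_def]
    positivity
  -- integrability of the dominating function
  set Bmaj := fun x : ℝ => (4 * Cg ^ 2 / α) * exp (-(2 * c) * |x|) +
      ((4 * CK ^ 2 / α) * (1 + x ^ 2)⁻¹ +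
        (Mg * Real.cot θ * (Cg + CK)) * exp (-(α * s) * |x|)) with hBmaj_def
  have hBmaj_int : Integrable Bmaj := by
    rw [hBmaj_def]
    refine ((integrable_exp_neg_abs' (by positivity : (0:ℝ) < 2 * c)).const_mul _).add
      (((integrable_inv_one_add_sq).const_mul _).add
        ((integrable_exp_neg_abs' (mul_pos hα hs)).const_mul _))
  have hbound_le : ∀ x, bound x ≤ Bmaj x := by
    intro x
    set A := Cg * exp (-c * |x|) with hA_def
    set B := CK / Real.sqrt (1 + x ^ 2) with hB_def
    have hA : 0 ≤ A := by positivity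
    have hB : 0 ≤ B := by rw [hB_def]; positivity
    have hEx : E x = A + B := rfl
    have hA2 : A * A = Cg ^ 2 * exp (-(2 * c) * |x|) := by
      rw [hA_def]
      calc Cg * exp (-c * |x|) * (Cg * exp (-c * |x|))
          = Cg ^ 2 * (exp (-c * |x|) * exp (-c * |x|)) := by ring
        _ = Cg ^ 2 * exp (-(2 * c) * |x|) := by rw [← Real.exp_add]; ring_nf
    have hB2 : B * B = CK ^ 2 * (1 + x ^ 2)⁻¹ := by
      rw [hB_def, div_mul_div_comm, Real.mul_self_sqrt (by positivity), ← sq, div_eq_mul_inv]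
    have hEE : E x * E x ≤ 2 * (A * A) + 2 * (B * B) := by
      rw [hEx]; nlinarith [sq_nonneg (A - B)]
    have hT : E x * (Mg * exp (-(α * s) * |x|) * Real.cot θ) ≤
        (Cg + CK) * (Mg * exp (-(α * s) * |x|) * Real.cot θ) :=
      mul_le_mul_of_nonneg_right (hE_le x) (by positivity)
    calc bound x = (E x * E x) * (2 / α) + E x * (Mg * exp (-(α * s) * |x|) * Real.cot θ) := by
          rw [hbound_def]; ring
      _ ≤ (2 * (A * A) + 2 * (B * B)) * (2 / α) +
            (Cg + CK) * (Mg * exp (-(α * s) * |x|) * Real.cot θ) :=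
          add_le_add (mul_le_mul_of_nonneg_right hEE (by positivity)) hT
      _ = Bmaj x := by rw [hBmaj_def, hA2, hB2]; ring
  have hbound_int : Integrable bound := by
    refine hBmaj_int.mono' hbound_cont.aestronglyMeasurable ?_
    refine ae_of_all _ fun x => ?_
    rw [Real.norm_eq_abs, abs_of_nonneg (hbound_nonneg x)]
    exact hbound_le x
  -- apply dominated convergence
  refine tendsto_integral_filter_of_dominated_convergence bound ?_ ?_ hbound_int ?_
  · refine Eventually.of_forall fun n => ?_
    have hhc : Continuous fun x => F α (x * s) ^ ρ * χ (x / n) :=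
      hgcont.mul (hK.continuous.comp (continuous_id.div_const n))
    exact ((measurable_deriv _).mul (((measurable_deriv _).mul hFcont.measurable).sub
      ((hhc.measurable.mul hexpm.measurable).mul_const _))).aestronglyMeasurable
  · filter_upwards [eventually_ge_atTop (1:ℝ)] with n hn
    refine ae_of_all _ fun x => ?_
    have hd := hbn n hn x
    have hFx := F_pos hα (x * s)
    have hFle := F_le hα (x * s)
    have hhx : |F α (x * s) ^ ρ * χ (x / n)| ≤ Mg := by
      rw [abs_mul]
      calc |F α (x * s) ^ ρ| * |χ (x / n)| ≤ Mg * 1 :=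
            mul_le_mul (hg_abs x) (hχabs _) (abs_nonneg _) hMg
        _ = Mg := mul_one _
    rw [Real.norm_eq_abs, abs_mul]
    calc |deriv (fun x => F α (x * s) ^ ρ * χ (x / n)) x| *
          |deriv (fun x => F α (x * s) ^ ρ * χ (x / n)) x * F α (x * s) -
            F α (x * s) ^ ρ * χ (x / n) * exp (-α * |x| * s) * Real.cot θ|
        ≤ E x * (E x * (2 / α) + Mg * exp (-(α * s) * |x|) * Real.cot θ) := by
          refine mul_le_mul hd ?_ (abs_nonneg _) (hE_nonneg x)
          refine (abs_sub _ _).trans (add_le_add ?_ ?_)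
          · rw [abs_mul, abs_of_pos hFx]
            exact mul_le_mul hd hFle hFx.le (hE_nonneg x)
          · rw [abs_mul, abs_mul, abs_of_pos hcot, abs_of_pos (exp_pos _), hee x]
            refine mul_le_mul_of_nonneg_right ?_ hcot.le
            exact mul_le_mul_of_nonneg_right hhx (exp_pos _).le
      _ = bound x := by rw [hbound_def]
  · refine ae_of_all _ fun x => ?_
    have hevn : (fun n : ℝ => deriv (fun y => F α (y * s) ^ ρ) x *
        (deriv (fun y => F α (y * s) ^ ρ) x * F α (x * s) -
          F α (x * s) ^ ρ * exp (-α * |x| * s) * Real.cot θ)) =ᶠ[atTop]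
        (fun n : ℝ => deriv (fun y => F α (y * s) ^ ρ * χ (y / n)) x *
          (deriv (fun y => F α (y * s) ^ ρ * χ (y / n)) x * F α (x * s) -
            F α (x * s) ^ ρ * χ (x / n) * exp (-α * |x| * s) * Real.cot θ)) := by
      filter_upwards [eventually_gt_atTop (|x|)] with n hn
      have h1 := hev1 n x hn
      rw [h1.deriv_eq, h1.eq_of_nhds]
    exact tendsto_const_nhds.congr' hevn
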